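/- Let R be the operator (Rf)(x) = (1/2)( (1/x)∫₀ˣ f + (1/(1−x))∫ₓ¹ f ) on bounded measurable functions on (0,1). Then there is NO measurable map σ : (0,1) → (0,1) such that R((f∘σ)g) = f·R(g) for all bounded measurable f, g on (0,1). In particular, if such σ existed, taking g = 1 and f(x) = xⁿ would force ∫₀¹ (2σ(t))ⁿ dt = 1 for all n ≥ 0, implying σ ≡ 1/2 a.e., a contradiction. -/

import Mathlib

open MeasureTheory

/-- The transfer operator `(Rf)(x) = ½( (1/x)∫₀ˣ f + (1/(1−x))∫ₓ¹ f )` on `(0,1)`. -/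
noncomputable def Rop (f : ℝ → ℝ) (x : ℝ) : ℝ :=
  (1 / 2) * ((1 / x) * ∫ t in Set.Ioo (0 : ℝ) x, f t
    + (1 / (1 - x)) * ∫ t in Set.Ioo x (1 : ℝ), f t)

/-- The notation in `Rop` nests the second integral inside the first; for integrable
`f` this agrees with the intended expression. -/
lemma Rop_eq (f : ℝ → ℝ) (x : ℝ) (hx0 : 0 < x)
    (hf : IntegrableOn f (Set.Ioo (0:ℝ) x)) :
    Rop f x = (1 / 2) * ((1 / x) * (∫ t in Set.Ioo (0 : ℝ) x, f t)
      + (1 / (1 - x)) * (∫ t in Set.Ioo x (1 : ℝ), f t)) := by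
  unfold Rop
  rw [integral_add hf (integrableOn_const (by simp [Real.volume_Ioo]))]
  rw [setIntegral_const, measureReal_def, Real.volume_Ioo, ENNReal.toReal_ofReal (by linarith : (0:ℝ) ≤ x - 0)]
  simp only [smul_eq_mul]
  field_simp
  ring

/-- there is NO measurable endomorphism `σ` of `(0,1)` for which the
pull-out identity `R((f∘σ)g) = f·R(g)` holds on `(0,1)` for all bounded measurable
`f, g`. -/
theorem stmt10 :
    ¬ ∃ σ : ℝ → ℝ, Measurable σ ∧ (∀ x ∈ Set.Ioo (0 : ℝ) 1, σ x ∈ Set.Ioo (0 : ℝ) 1) ∧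
      ∀ f g : ℝ → ℝ, Measurable f → Measurable g →
        (∃ C, ∀ x, |f x| ≤ C) → (∃ C, ∀ x, |g x| ≤ C) →
        ∀ x ∈ Set.Ioo (0 : ℝ) 1, Rop (fun t => f (σ t) * g t) x = f x * Rop g x := by
  rintro ⟨σ, hσm, hσmem, H⟩
  -- Choose f = indicator of Iio (1/2), g = 1.
  set f : ℝ → ℝ := Set.indicator (Set.Iio (1/2 : ℝ)) (fun _ => 1) with hf
  have hfm : Measurable f := measurable_const.indicator measurableSet_Iio
  have hf01 : ∀ x, 0 ≤ f x ∧ f x ≤ 1 := by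
    intro x
    by_cases h : x ∈ Set.Iio (1/2 : ℝ) <;> simp [hf, Set.indicator, h] <;> constructor <;> split_ifs <;> norm_num
  have hfb : ∀ x, |f x| ≤ 1 := fun x =>
    abs_le.2 ⟨by linarith [(hf01 x).1], (hf01 x).2⟩
  -- h = f ∘ σ
  set h : ℝ → ℝ := fun t => f (σ t) with hh
  have hhm : Measurable h := hfm.comp hσm
  have hh01 : ∀ t, 0 ≤ h t ∧ h t ≤ 1 := fun t => hf01 (σ t)
  -- integrability of h on bounded intervals
  have hintIoo : ∀ a b : ℝ, IntegrableOn h (Set.Ioo a b) := by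
    intro a b
    apply Integrable.mono' (g := fun _ => (1:ℝ))
    · exact integrableOn_const (by simp [Real.volume_Ioo])
    · exact hhm.aestronglyMeasurable
    · filter_upwards with t
      exact abs_le.2 ⟨by linarith [(hh01 t).1], (hh01 t).2⟩
  have hintIoc : ∀ a b : ℝ, IntegrableOn h (Set.Ioc a b) := by
    intro a b
    apply Integrable.mono' (g := fun _ => (1:ℝ))
    · exact integrableOn_const (by simp [Real.volume_Ioc])
    · exact hhm.aestronglyMeasurable
    · filter_upwards with t
      exact abs_le.2 ⟨by linarith [(hh01 t).1], (hh01 t).2⟩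
  -- bounds on set integrals of h
  have hA_nonneg : ∀ a b : ℝ, 0 ≤ ∫ t in Set.Ioo a b, h t := by
    intro a b
    exact setIntegral_nonneg measurableSet_Ioo (fun t _ => (hh01 t).1)
  have hA_le : ∀ a b : ℝ, a ≤ b → (∫ t in Set.Ioo a b, h t) ≤ b - a := by
    intro a b hab
    have h1 : (∫ t in Set.Ioo a b, h t) ≤ ∫ t in Set.Ioo a b, (1:ℝ) := by
      apply setIntegral_mono_on (hintIoo a b)
        (integrableOn_const (by simp [Real.volume_Ioo]))
        measurableSet_Ioo
      exact fun t _ => (hh01 t).2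
    have h2 : (∫ t in Set.Ioo a b, (1:ℝ)) = b - a := by
      simp [Real.volume_Ioo, ENNReal.toReal_ofReal (by linarith : (0:ℝ) ≤ b - a), hab]
    linarith
  -- Rop of the constant function 1
  have hRg : ∀ x ∈ Set.Ioo (0:ℝ) 1, Rop (fun _ => (1:ℝ)) x = 1 := by
    rintro x ⟨hx0, hx1⟩
    have e1 : (∫ t in Set.Ioo (0:ℝ) x, (1:ℝ)) = x := by
      simp [Real.volume_Ioo, ENNReal.toReal_ofReal hx0.le, hx0.le]
    have e2 : (∫ t in Set.Ioo x (1:ℝ), (1:ℝ)) = 1 - x := by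
      simp [Real.volume_Ioo, ENNReal.toReal_ofReal (by linarith : (0:ℝ) ≤ 1 - x), hx1.le]
    rw [Rop_eq _ _ hx0
      (integrableOn_const (by simp [Real.volume_Ioo])), e1, e2]
    have hx1' : (1:ℝ) - x ≠ 0 := by linarith
    field_simp
    norm_num
  -- apply the hypothesis
  have H1 := H f (fun _ => 1) hfm measurable_const ⟨1, hfb⟩ ⟨1, fun _ => by norm_num⟩
  have key : ∀ x ∈ Set.Ioo (0:ℝ) 1, Rop h x = f x := by
    intro x hx
    have := H1 x hx
    rw [hRg x hx] at this
    simpa [hh] using this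
  -- evaluate at 1/4 and 3/4
  have hm14 : (1/4 : ℝ) ∈ Set.Ioo (0:ℝ) 1 := by norm_num
  have hm34 : (3/4 : ℝ) ∈ Set.Ioo (0:ℝ) 1 := by norm_num
  have e14 : (1/2 : ℝ) * ((1/(1/4:ℝ)) * (∫ t in Set.Ioo (0:ℝ) (1/4:ℝ), h t)
      + (1/(1-(1/4:ℝ))) * (∫ t in Set.Ioo (1/4:ℝ) (1:ℝ), h t)) = 1 := by
    rw [← Rop_eq h _ (by norm_num) (hintIoo 0 (1/4)), key _ hm14]
    simp [hf, Set.indicator]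
    norm_num
  have e34 : (1/2 : ℝ) * ((1/(3/4:ℝ)) * (∫ t in Set.Ioo (0:ℝ) (3/4:ℝ), h t)
      + (1/(1-(3/4:ℝ))) * (∫ t in Set.Ioo (3/4:ℝ) (1:ℝ), h t)) = 0 := by
    rw [← Rop_eq h _ (by norm_num) (hintIoo 0 (3/4)), key _ hm34]
    simp [hf, Set.indicator]
    norm_num
  -- additivity: ∫ over (0,x) + ∫ over (x,1) = ∫ over (0,1)
  have hadd : ∀ x : ℝ, 0 < x → x < 1 →
      (∫ t in Set.Ioo (0:ℝ) x, h t) + (∫ t in Set.Ioo x (1:ℝ), h t)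
        = ∫ t in Set.Ioo (0:ℝ) (1:ℝ), h t := by
    intro x hx0 hx1
    have c1 : (∫ t in Set.Ioo (0:ℝ) x, h t) = ∫ t in Set.Ioc (0:ℝ) x, h t :=
      (integral_Ioc_eq_integral_Ioo).symm
    have c2 : (∫ t in Set.Ioo x (1:ℝ), h t) = ∫ t in Set.Ioc x (1:ℝ), h t :=
      (integral_Ioc_eq_integral_Ioo).symm
    have c3 : (∫ t in Set.Ioo (0:ℝ) (1:ℝ), h t) = ∫ t in Set.Ioc (0:ℝ) (1:ℝ), h t :=
      (integral_Ioc_eq_integral_Ioo).symm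
    rw [c1, c2, c3]
    rw [← setIntegral_union (Set.Ioc_disjoint_Ioc_of_le le_rfl) measurableSet_Ioc
      (hintIoc 0 x) (hintIoc x 1)]
    rw [Set.Ioc_union_Ioc_eq_Ioc hx0.le hx1.le]
  have hadd1 := hadd (1/4) (by norm_num) (by norm_num)
  have hadd2 := hadd (3/4) (by norm_num) (by norm_num)
  have hA1le := hA_le 0 (1/4) (by norm_num)
  have hB1le := hA_le (1/4) 1 (by norm_num)
  have hA2n := hA_nonneg 0 (3/4 : ℝ)
  have hB2n := hA_nonneg (3/4 : ℝ) 1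
  norm_num at hadd1 hadd2 hA1le hB1le hA2n hB2n
  set A1 := ∫ t in Set.Ioo (0:ℝ) (1/4 : ℝ), h t with hA1d
  set B1 := ∫ t in Set.Ioo (1/4:ℝ) (1:ℝ), h t with hB1d
  set A2 := ∫ t in Set.Ioo (0:ℝ) (3/4 : ℝ), h t with hA2d
  set B2 := ∫ t in Set.Ioo (3/4:ℝ) (1:ℝ), h t with hB2d
  set T := ∫ t in Set.Ioo (0:ℝ) (1:ℝ), h t with hTd
  linarith
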